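/- Let μ be a positive measure on 𝔻 such that ∬_𝔻 |h(z)|² dμ(z) ≤ C‖h‖²_{H²} for all scalar h ∈ H². Then for every Banach space X and every analytic f : 𝔻 → X with ‖f‖²_{H²(X)} := sup_{0≤r<1} ∫_𝕋 ‖f(rζ)‖²_X dm(ζ) < ∞, one has ∬_𝔻 ‖f(z)‖²_X dμ(z) ≤ C‖f‖²_{H²(X)}; that is, the Carleson embedding holds with the same constant for H² spaces with values in an arbitrary Banach space. -/

import Mathlib

open MeasureTheory Metric Set
open scoped ENNReal Topology

noncomputable section

abbrev 𝔻 : Set ℂ := Metric.ball 0 1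

/-- the set of mean values `∫_𝕋 ‖h(rζ)‖² dm(ζ)` over radii `0 ≤ r < 1` -/
noncomputable def hardySet {E : Type*} [NormedAddCommGroup E] (h : ℂ → E) : Set ℝ :=
  (fun r : ℝ => (2 * Real.pi)⁻¹ *
      ∫ t in (0 : ℝ)..(2 * Real.pi), ‖h ((r : ℂ) * Complex.exp ((t : ℂ) * Complex.I))‖ ^ 2) ''
    Set.Ico 0 1

/-- the squared Hardy space norm `‖h‖²_{H²(E)} = sup_{0≤r<1} ∫_𝕋 ‖h(rζ)‖² dm(ζ)` -/
noncomputable def hardySq {E : Type*} [NormedAddCommGroup E] (h : ℂ → E) : ℝ :=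
  sSup (hardySet h)


open Filter
open scoped NNReal

lemma integral_exp_int_mul (m : ℤ) (hm : m ≠ 0) :
    ∫ t in (0:ℝ)..(2*Real.pi), Complex.exp ((m:ℂ) * ((t:ℂ) * Complex.I)) = 0 := by
  have h : ∀ t : ℝ, (m:ℂ) * ((t:ℂ) * Complex.I) = ((m:ℂ) * Complex.I) * (t:ℂ) := by
    intro t; ring
  simp_rw [h]
  rw [integral_exp_mul_complex (mul_ne_zero (Int.cast_ne_zero.mpr hm) Complex.I_ne_zero)]
  have h1 : ((m:ℂ) * Complex.I) * ((2:ℝ)*Real.pi : ℝ) = (m:ℂ) * (2 * Real.pi * Complex.I) := by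
    push_cast; ring
  rw [h1, Complex.exp_int_mul_two_pi_mul_I]
  simp

lemma integral_trig_sq (n : ℕ) (d : ℕ → ℂ) :
    ∫ t in (0:ℝ)..(2*Real.pi),
      ‖∑ k ∈ Finset.range n, d k * Complex.exp ((k:ℂ) * ((t:ℂ) * Complex.I))‖ ^ 2
      = 2 * Real.pi * ∑ k ∈ Finset.range n, ‖d k‖ ^ 2 := by
  have key : ∀ j ∈ Finset.range n, ∀ k ∈ Finset.range n,
      (∫ t in (0:ℝ)..(2*Real.pi),
        (d j * Complex.exp ((j:ℂ) * ((t:ℂ) * Complex.I))) *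
          (starRingEnd ℂ) (d k * Complex.exp ((k:ℂ) * ((t:ℂ) * Complex.I))))
      = if j = k then (d j * (starRingEnd ℂ) (d j)) * (2*Real.pi) else 0 := by
    intro j _ k _
    have hconj : ∀ t : ℝ, (starRingEnd ℂ) (Complex.exp ((k:ℂ) * ((t:ℂ) * Complex.I)))
        = Complex.exp (-((k:ℂ) * ((t:ℂ) * Complex.I))) := by
      intro t
      rw [← Complex.exp_conj]
      congr 1
      simp [Complex.conj_ofReal]
    have hintegrand : ∀ t : ℝ,
        (d j * Complex.exp ((j:ℂ) * ((t:ℂ) * Complex.I))) *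
          (starRingEnd ℂ) (d k * Complex.exp ((k:ℂ) * ((t:ℂ) * Complex.I)))
        = (d j * (starRingEnd ℂ) (d k)) *
            Complex.exp ((((j:ℤ) - (k:ℤ) : ℤ):ℂ) * ((t:ℂ) * Complex.I)) := by
      intro t
      rw [map_mul, hconj, mul_mul_mul_comm, ← Complex.exp_add]
      congr 2
      push_cast
      ring
    simp_rw [hintegrand]
    rw [intervalIntegral.integral_const_mul]
    by_cases hjk : j = k
    · subst hjk
      simp only [sub_self, Int.cast_zero, zero_mul, Complex.exp_zero, if_pos rfl]
      rw [intervalIntegral.integral_const]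
      simp [Complex.real_smul]
    · have hne : ((j:ℤ) - (k:ℤ)) ≠ 0 := sub_ne_zero.mpr (by exact_mod_cast hjk)
      rw [integral_exp_int_mul _ hne]
      simp [hjk]
  -- now the main computation
  set S : ℝ → ℂ := fun t => ∑ k ∈ Finset.range n, d k * Complex.exp ((k:ℂ) * ((t:ℂ) * Complex.I))
    with hS
  have hSc : Continuous S := by
    apply continuous_finset_sum
    intro k _
    exact continuous_const.mul (Complex.continuous_exp.comp (by continuity))
  have hterm : ∀ j k : ℕ, Continuous (fun t : ℝ =>
      (d j * Complex.exp ((j:ℂ) * ((t:ℂ) * Complex.I))) *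
        (starRingEnd ℂ) (d k * Complex.exp ((k:ℂ) * ((t:ℂ) * Complex.I)))) := by
    intro j k
    apply Continuous.mul
    · exact continuous_const.mul (Complex.continuous_exp.comp (by continuity))
    · exact Complex.continuous_conj.comp
        (continuous_const.mul (Complex.continuous_exp.comp (by continuity)))
  have hofreal : ((∫ t in (0:ℝ)..(2*Real.pi), ‖S t‖ ^ 2 : ℝ) : ℂ)
      = ∫ t in (0:ℝ)..(2*Real.pi), S t * (starRingEnd ℂ) (S t) := by
    rw [← intervalIntegral.integral_ofReal]
    congr 1
    funext t
    rw [Complex.mul_conj']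
    norm_cast
  have hexpand : (∫ t in (0:ℝ)..(2*Real.pi), S t * (starRingEnd ℂ) (S t))
      = ∑ j ∈ Finset.range n, ∑ k ∈ Finset.range n,
          ∫ t in (0:ℝ)..(2*Real.pi),
            (d j * Complex.exp ((j:ℂ) * ((t:ℂ) * Complex.I))) *
              (starRingEnd ℂ) (d k * Complex.exp ((k:ℂ) * ((t:ℂ) * Complex.I))) := by
    have : ∀ t : ℝ, S t * (starRingEnd ℂ) (S t)
        = ∑ j ∈ Finset.range n, ∑ k ∈ Finset.range n,
            (d j * Complex.exp ((j:ℂ) * ((t:ℂ) * Complex.I))) *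
              (starRingEnd ℂ) (d k * Complex.exp ((k:ℂ) * ((t:ℂ) * Complex.I))) := by
      intro t
      rw [hS]
      simp only [map_sum]
      rw [Finset.sum_mul_sum]
    simp_rw [this]
    rw [intervalIntegral.integral_finset_sum]
    · refine Finset.sum_congr rfl fun j _ => ?_
      exact intervalIntegral.integral_finset_sum
        (fun k _ => ((hterm j k).intervalIntegrable _ _))
    · intro j _
      exact (continuous_finset_sum _ fun k _ => hterm j k).intervalIntegrable _ _
  have hdiag : (∑ j ∈ Finset.range n, ∑ k ∈ Finset.range n,
      ∫ t in (0:ℝ)..(2*Real.pi),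
        (d j * Complex.exp ((j:ℂ) * ((t:ℂ) * Complex.I))) *
          (starRingEnd ℂ) (d k * Complex.exp ((k:ℂ) * ((t:ℂ) * Complex.I))))
      = ((2 * Real.pi * ∑ k ∈ Finset.range n, ‖d k‖ ^ 2 : ℝ) : ℂ) := by
    rw [Finset.sum_congr rfl fun j hj => Finset.sum_congr rfl fun k hk => key j hj k hk]
    simp only [Finset.sum_ite_eq]
    push_cast
    rw [Finset.mul_sum]
    refine Finset.sum_congr rfl fun j hj => ?_
    rw [if_pos hj, Complex.mul_conj']
    ring
  have := hofreal.trans (hexpand.trans hdiag)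
  exact_mod_cast this


lemma tendsto_intInt_of_unif {F : ℕ → ℝ → ℝ} {f : ℝ → ℝ} {a b : ℝ} (hab : a ≤ b)
    (hF : ∀ n, ContinuousOn (F n) (Set.Icc a b)) (hf : ContinuousOn f (Set.Icc a b))
    (h : TendstoUniformlyOn F f atTop (Set.Icc a b)) :
    Tendsto (fun n => ∫ t in a..b, F n t) atTop (𝓝 (∫ t in a..b, f t)) := by
  rw [Metric.tendsto_atTop]
  intro ε hε
  have hba : (0:ℝ) < b - a + 1 := by linarith
  have hδ : 0 < ε / (b - a + 1) := div_pos hε hba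
  have h2 := Metric.tendstoUniformlyOn_iff.1 h _ hδ
  rw [Filter.eventually_atTop] at h2
  obtain ⟨N, hN⟩ := h2
  refine ⟨N, fun n hn => ?_⟩
  have hint1 : IntervalIntegrable (F n) volume a b :=
    ((hF n).mono (Set.uIcc_of_le hab).subset).intervalIntegrable
  have hint2 : IntervalIntegrable f volume a b :=
    (hf.mono (Set.uIcc_of_le hab).subset).intervalIntegrable
  rw [Real.dist_eq, ← intervalIntegral.integral_sub hint1 hint2]
  have hb2 : ∀ x ∈ Set.uIoc a b, ‖F n x - f x‖ ≤ ε / (b - a + 1) := by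
    intro x hx
    have hx' : x ∈ Set.Icc a b := by
      rw [Set.uIoc_of_le hab] at hx
      exact ⟨hx.1.le, hx.2⟩
    have h3 := hN n hn x hx'
    rw [dist_comm] at h3
    rw [Real.norm_eq_abs, ← Real.dist_eq]
    exact h3.le
  calc |∫ x in a..b, (F n x - f x)|
      ≤ ε / (b - a + 1) * |b - a| :=
        intervalIntegral.norm_integral_le_of_norm_le_const hb2
    _ < ε := by
        rw [abs_of_nonneg (by linarith), div_mul_eq_mul_div, div_lt_iff₀ hba]
        nlinarith

lemma tendstoUniformlyOn_normSq {S : ℕ → ℝ → ℂ} {g : ℝ → ℂ} {s : Set ℝ}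
    (h : TendstoUniformlyOn S g atTop s) {K : ℝ} (hK0 : 0 ≤ K)
    (hK : ∀ x ∈ s, ‖g x‖ ≤ K) :
    TendstoUniformlyOn (fun n x => ‖S n x‖^2) (fun x => ‖g x‖^2) atTop s := by
  rw [Metric.tendstoUniformlyOn_iff] at h ⊢
  intro ε hε
  have hδpos : 0 < min 1 (ε / (2*K + 2)) :=
    lt_min one_pos (div_pos hε (by linarith))
  filter_upwards [h _ hδpos] with n hn x hx
  have hd := hn x hx
  have hd1 : dist (g x) (S n x) < 1 := hd.trans_le (min_le_left _ _)
  have hd2 : dist (g x) (S n x) < ε / (2*K + 2) := hd.trans_le (min_le_right _ _)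
  have hSb : ‖S n x‖ ≤ K + 1 := by
    have : ‖S n x‖ ≤ ‖g x‖ + dist (g x) (S n x) := by
      rw [dist_comm, dist_eq_norm]
      calc ‖S n x‖ = ‖g x + (S n x - g x)‖ := by rw [add_sub_cancel]
        _ ≤ ‖g x‖ + ‖S n x - g x‖ := norm_add_le _ _
    linarith [hK x hx]
  have habs : |‖S n x‖ - ‖g x‖| ≤ dist (g x) (S n x) := by
    rw [dist_comm, dist_eq_norm]
    exact abs_norm_sub_norm_le _ _
  rw [Real.dist_eq]
  have hfact : ‖g x‖^2 - ‖S n x‖^2 = (‖g x‖ - ‖S n x‖) * (‖g x‖ + ‖S n x‖) := by ring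
  have hsum : ‖g x‖ + ‖S n x‖ ≤ 2*K + 1 := by linarith [hK x hx]
  have hsum0 : 0 ≤ ‖g x‖ + ‖S n x‖ := by positivity
  calc |‖g x‖^2 - ‖S n x‖^2| = |‖g x‖ - ‖S n x‖| * (‖g x‖ + ‖S n x‖) := by
        rw [hfact, abs_mul, abs_of_nonneg hsum0]
    _ ≤ dist (g x) (S n x) * (2*K + 1) := by
        apply mul_le_mul _ hsum hsum0 dist_nonneg
        rw [abs_sub_comm]; exact habs
    _ ≤ dist (g x) (S n x) * (2*K + 2) :=
        mul_le_mul_of_nonneg_left (by linarith) dist_nonneg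
    _ < ε / (2*K+2) * (2*K+2) := mul_lt_mul_of_pos_right hd2 (by linarith)
    _ = ε := by field_simp

lemma meanSq_le {G : ℂ → ℂ} (hG : Differentiable ℂ G) {ρ : ℝ} (h0 : 0 ≤ ρ) (h1 : ρ ≤ 1) :
    ∫ t in (0:ℝ)..(2*Real.pi), ‖G ((ρ:ℂ) * Complex.exp ((t:ℂ) * Complex.I))‖ ^ 2
      ≤ ∫ t in (0:ℝ)..(2*Real.pi), ‖G (Complex.exp ((t:ℂ) * Complex.I))‖ ^ 2 := by
  have h2pi : (0:ℝ) ≤ 2*Real.pi := by positivity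
  set p := cauchyPowerSeries G 0 ((2:ℝ≥0):ℝ) with hpdef
  have hps : HasFPowerSeriesOnBall G p 0 ((2:ℝ≥0):ℝ≥0∞) :=
    (hG.differentiableOn :
      DifferentiableOn ℂ G (closedBall 0 ((2:ℝ≥0):ℝ))).hasFPowerSeriesOnBall (by norm_num)
  have hU : TendstoUniformlyOn (fun n y => p.partialSum n y) (fun y => G (0 + y)) atTop
      (ball (0:ℂ) ((3/2 : ℝ≥0) : ℝ)) :=
    hps.tendstoUniformlyOn (by
      rw [ENNReal.coe_lt_coe]
      exact_mod_cast (by norm_num : (3/2:ℝ) < 2))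
  -- bound for G on the closed ball
  obtain ⟨K₀, hK₀⟩ := (isCompact_closedBall (0:ℂ) ((3/2:ℝ≥0):ℝ)).exists_bound_of_continuousOn
    hG.continuous.continuousOn
  set K := max K₀ 0 with hK
  have hKb : ∀ x ∈ closedBall (0:ℂ) ((3/2:ℝ≥0):ℝ), ‖G x‖ ≤ K :=
    fun x hx => (hK₀ x hx).trans (le_max_left _ _)
  -- the circle maps
  have hmem : ∀ σ : ℝ, 0 ≤ σ → σ ≤ 1 → ∀ t : ℝ,
      (σ:ℂ) * Complex.exp ((t:ℂ) * Complex.I) ∈ ball (0:ℂ) ((3/2:ℝ≥0):ℝ) := by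
    intro σ hσ0 hσ1 t
    rw [mem_ball_zero_iff]
    rw [norm_mul, Complex.norm_real, Real.norm_eq_abs, abs_of_nonneg hσ0]
    have : ‖(Complex.exp ((t:ℂ) * Complex.I))‖ = 1 := Complex.norm_exp_ofReal_mul_I t
    rw [this, mul_one]
    calc σ ≤ 1 := hσ1
      _ < ((3/2:ℝ≥0):ℝ) := by norm_num
  -- partial sums on circles are trig polynomials
  have hpart : ∀ (σ : ℝ), 0 ≤ σ → ∀ (n : ℕ) (t : ℝ),
      p.partialSum n ((σ:ℂ) * Complex.exp ((t:ℂ) * Complex.I))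
        = ∑ k ∈ Finset.range n, (p.coeff k * (σ:ℂ)^k) *
            Complex.exp ((k:ℂ) * ((t:ℂ) * Complex.I)) := by
    intro σ hσ n t
    rw [FormalMultilinearSeries.partialSum]
    refine Finset.sum_congr rfl fun k _ => ?_
    rw [FormalMultilinearSeries.apply_eq_pow_smul_coeff, smul_eq_mul]
    rw [mul_pow, ← Complex.exp_nat_mul]
    ring
  -- convergence of the means
  have hconv : ∀ (σ : ℝ), 0 ≤ σ → σ ≤ 1 →
      Tendsto (fun n => ∫ t in (0:ℝ)..(2*Real.pi),
          ‖p.partialSum n ((σ:ℂ) * Complex.exp ((t:ℂ) * Complex.I))‖^2) atTop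
        (𝓝 (∫ t in (0:ℝ)..(2*Real.pi),
          ‖G ((σ:ℂ) * Complex.exp ((t:ℂ) * Complex.I))‖^2)) := by
    intro σ hσ0 hσ1
    have hγ : Continuous (fun t : ℝ => (σ:ℂ) * Complex.exp ((t:ℂ) * Complex.I)) := by
      continuity
    have hcomp : TendstoUniformlyOn
        (fun (n : ℕ) (t : ℝ) => p.partialSum n ((σ:ℂ) * Complex.exp ((t:ℂ) * Complex.I)))
        (fun (t : ℝ) => G (0 + (σ:ℂ) * Complex.exp ((t:ℂ) * Complex.I))) atTop
        (Set.Icc 0 (2*Real.pi)) := by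
      have := hU.comp (fun t : ℝ => (σ:ℂ) * Complex.exp ((t:ℂ) * Complex.I))
      exact this.mono fun t _ => hmem σ hσ0 hσ1 t
    simp only [zero_add] at hcomp
    have hbnd : ∀ t ∈ Set.Icc (0:ℝ) (2*Real.pi),
        ‖G ((σ:ℂ) * Complex.exp ((t:ℂ) * Complex.I))‖ ≤ K :=
      fun t _ => hKb _ (ball_subset_closedBall (hmem σ hσ0 hσ1 t))
    have hsq := tendstoUniformlyOn_normSq hcomp (le_max_right _ _) hbnd
    refine tendsto_intInt_of_unif h2pi (fun n => ?_) ?_ hsq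
    · exact (((p.partialSum_continuous n).comp hγ).norm.pow 2).continuousOn
    · exact (((hG.continuous.comp hγ).norm.pow 2)).continuousOn
  -- termwise comparison
  have hle : ∀ n : ℕ,
      (∫ t in (0:ℝ)..(2*Real.pi),
        ‖p.partialSum n ((ρ:ℂ) * Complex.exp ((t:ℂ) * Complex.I))‖^2)
      ≤ ∫ t in (0:ℝ)..(2*Real.pi),
        ‖p.partialSum n ((1:ℝ) * Complex.exp ((t:ℂ) * Complex.I))‖^2 := by
    intro n
    simp_rw [hpart ρ h0 n, hpart 1 zero_le_one n]
    rw [integral_trig_sq, integral_trig_sq]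
    apply mul_le_mul_of_nonneg_left _ h2pi
    apply Finset.sum_le_sum
    intro k _
    apply pow_le_pow_left₀ (norm_nonneg _)
    rw [norm_mul, norm_mul]
    apply mul_le_mul_of_nonneg_left _ (norm_nonneg _)
    rw [norm_pow, norm_pow]
    apply pow_le_pow_left₀ (norm_nonneg _)
    rw [Complex.norm_real, Complex.norm_real, Real.norm_eq_abs, Real.norm_eq_abs,
      abs_of_nonneg h0, abs_one]
    exact h1
  have h1' := hconv 1 zero_le_one le_rfl
  have hρ' := hconv ρ h0 h1
  have := le_of_tendsto_of_tendsto' hρ' h1' hle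
  simpa using this

lemma exists_trigPoly (u : ℝ → ℝ) (hu : Continuous u)
    (hper : Function.Periodic u (2*Real.pi)) {ε : ℝ} (hε : 0 < ε) :
    ∃ q : ℂ → ℂ, Differentiable ℂ q ∧
      ∀ t : ℝ, |(q (Complex.exp ((t:ℂ) * Complex.I))).re - u t| ≤ ε := by
  haveI : Fact (0 < 2*Real.pi) := ⟨by positivity⟩
  have hlift : Continuous (fun x : AddCircle (2*Real.pi) => ((hper.lift x : ℝ) : ℂ)) := by
    apply Complex.continuous_ofReal.comp
    exact continuous_coinduced_dom.mpr hu
  set uc : C(AddCircle (2*Real.pi), ℂ) := ⟨_, hlift⟩ with huc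
  have hmem : uc ∈ closure ((Submodule.span ℂ (Set.range (@fourier (2*Real.pi)))) : Set _) := by
    have h := span_fourier_closure_eq_top (T := 2*Real.pi)
    have : uc ∈ (Submodule.span ℂ (Set.range (@fourier (2*Real.pi)))).topologicalClosure := by
      rw [h]; trivial
    exact this
  rw [Metric.mem_closure_iff] at hmem
  obtain ⟨P, hPmem, hPdist⟩ := hmem ε hε
  rw [SetLike.mem_coe, Finsupp.mem_span_range_iff_exists_finsupp] at hPmem
  obtain ⟨c, hc⟩ := hPmem
  classical
  set w : ℤ → ℂ := fun m => if m = 0 then ((c 0).re : ℂ) else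
    if 0 < m then c m else (starRingEnd ℂ) (c m) with hw
  refine ⟨fun z => ∑ m ∈ c.support, w m * z ^ m.natAbs, ?_, ?_⟩
  · exact Differentiable.fun_sum fun m _ => (differentiable_pow _).const_mul _
  · intro t
    have hPt : P ((t : ℝ) : AddCircle (2*Real.pi))
        = ∑ m ∈ c.support, c m * fourier m ((t : ℝ) : AddCircle (2*Real.pi)) := by
      rw [← hc]
      rw [Finsupp.sum]
      simp [ContinuousMap.coe_sum]
    have hfour : ∀ m : ℤ, (fourier m ((t : ℝ) : AddCircle (2*Real.pi)) : ℂ)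
        = Complex.exp ((m:ℂ) * ((t:ℂ) * Complex.I)) := by
      intro m
      rw [fourier_coe_apply]
      congr 1
      have hπ : (Real.pi : ℂ) ≠ 0 := by
        exact_mod_cast Real.pi_ne_zero
      field_simp
      push_cast
      ring
    have hre : (∑ m ∈ c.support, w m * (Complex.exp ((t:ℂ) * Complex.I)) ^ m.natAbs).re
        = (P ((t : ℝ) : AddCircle (2*Real.pi))).re := by
      rw [hPt, Complex.re_sum, Complex.re_sum]
      refine Finset.sum_congr rfl fun m _ => ?_
      rw [hfour]
      have hexp : (Complex.exp ((t:ℂ) * Complex.I)) ^ m.natAbs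
          = Complex.exp ((m.natAbs : ℂ) * ((t:ℂ) * Complex.I)) := by
        rw [← Complex.exp_nat_mul]
      rw [hexp, hw]
      rcases lt_trichotomy m 0 with hm | hm | hm
      · simp only [if_neg hm.ne, if_neg (not_lt.mpr hm.le)]
        have hna : ((m.natAbs : ℕ) : ℂ) = -(m : ℂ) := by
          have h1 : (m.natAbs : ℤ) = -m := by omega
          calc ((m.natAbs : ℕ) : ℂ) = (((m.natAbs : ℤ)) : ℂ) := (Int.cast_natCast _).symm
            _ = ((-m : ℤ) : ℂ) := by rw [h1]
            _ = -(m : ℂ) := Int.cast_neg _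
        rw [hna]
        have : (starRingEnd ℂ) (c m) * Complex.exp (-(m:ℂ) * ((t:ℂ) * Complex.I))
            = (starRingEnd ℂ) (c m * Complex.exp ((m:ℂ) * ((t:ℂ) * Complex.I))) := by
          rw [map_mul, ← Complex.exp_conj]
          congr 2
          simp [Complex.conj_ofReal]
        rw [this, Complex.conj_re]
      · subst hm
        simp
      · simp only [if_neg hm.ne', if_pos hm]
        have hna : ((m.natAbs : ℕ) : ℂ) = (m : ℂ) := by
          have h1 : (m.natAbs : ℤ) = m := by omega
          calc ((m.natAbs : ℕ) : ℂ) = (((m.natAbs : ℤ)) : ℂ) := (Int.cast_natCast _).symm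
            _ = (m : ℂ) := by rw [h1]
        rw [hna]
    rw [hre]
    have huct : uc ((t : ℝ) : AddCircle (2*Real.pi)) = ((u t : ℝ) : ℂ) := by
      rw [huc]
      simp [Function.Periodic.lift_coe]
    have hd : dist (P ((t : ℝ) : AddCircle (2*Real.pi))) (uc ((t : ℝ) : AddCircle (2*Real.pi)))
        ≤ dist P uc := ContinuousMap.dist_apply_le_dist _
    rw [dist_comm P uc] at hd
    have hd2 : ‖(P ((t : ℝ) : AddCircle (2*Real.pi)) - ((u t : ℝ) : ℂ))‖ ≤ ε := by
      rw [← huct]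
      calc ‖_‖ = dist (P _) (uc _) := by rw [Complex.dist_eq]
        _ ≤ dist uc P := hd
        _ ≤ ε := hPdist.le
    calc |(P ((t : ℝ) : AddCircle (2*Real.pi))).re - u t|
        = |(P ((t : ℝ) : AddCircle (2*Real.pi)) - ((u t : ℝ) : ℂ)).re| := by
          rw [Complex.sub_re, Complex.ofReal_re]
      _ ≤ ‖(P ((t : ℝ) : AddCircle (2*Real.pi)) - ((u t : ℝ) : ℂ))‖ :=
          Complex.abs_re_le_norm _
      _ ≤ ε := hd2


lemma keyStep {μ : Measure ℂ} {C : ℝ}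
    (hcar : ∀ h : ℂ → ℂ, DifferentiableOn ℂ h 𝔻 → BddAbove (hardySet h) →
      ∫⁻ z in 𝔻, ENNReal.ofReal (‖h z‖ ^ 2) ∂μ ≤ ENNReal.ofReal (C * hardySq h))
    (hC : 0 ≤ C)
    {X : Type*} [NormedAddCommGroup X] [NormedSpace ℂ X]
    {f : ℂ → X} (hf : DifferentiableOn ℂ f 𝔻) (hb : BddAbove (hardySet f))
    {r ε : ℝ} (hr0 : 0 < r) (hr1 : r < 1) (hε : 0 < ε) :
    ∫⁻ z in 𝔻, ENNReal.ofReal (‖f ((r:ℂ) * z)‖ ^ 2) ∂μ ≤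
      ENNReal.ofReal (C * (Real.exp (4*ε) * ((1+ε) * hardySq f + (ε^2 + ε)))) := by
  have h2pi : (0:ℝ) < 2*Real.pi := by positivity
  have hmemD : ∀ (s : ℝ), 0 ≤ s → s < 1 → ∀ t : ℝ,
      (s:ℂ) * Complex.exp ((t:ℂ) * Complex.I) ∈ 𝔻 := by
    intro s h0 h1 t
    rw [mem_ball_zero_iff, norm_mul, Complex.norm_real, Real.norm_eq_abs, abs_of_nonneg h0,
      Complex.norm_exp_ofReal_mul_I, mul_one]
    exact h1
  have hfc : ContinuousOn f 𝔻 := hf.continuousOn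
  have hfr : Continuous (fun t : ℝ => f ((r:ℂ) * Complex.exp ((t:ℂ) * Complex.I))) :=
    hfc.comp_continuous (by continuity) (fun t => hmemD r hr0.le hr1 t)
  set u : ℝ → ℝ := fun t => Real.log (‖f ((r:ℂ) * Complex.exp ((t:ℂ) * Complex.I))‖ + ε)
    with hu_def
  have hu : Continuous u := (hfr.norm.add continuous_const).log
    (fun t => by show ‖f ((r:ℂ) * Complex.exp ((t:ℂ) * Complex.I))‖ + ε ≠ 0; positivity)
  have hper : Function.Periodic u (2*Real.pi) := by
    intro t
    have hexp : ((t + 2*Real.pi : ℝ) : ℂ) * Complex.I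
        = (t:ℂ) * Complex.I + 2*Real.pi*Complex.I := by push_cast; ring
    simp only [hu_def]
    rw [hexp, Complex.exp_add, Complex.exp_two_pi_mul_I, mul_one]
  obtain ⟨q, hq, hqu⟩ := exists_trigPoly u hu hper hε
  set H : ℂ → ℂ := fun z => Complex.exp (q z + (ε:ℂ)) with hH_def
  have hH : Differentiable ℂ H := (hq.add_const _).cexp
  have hHne : ∀ z, H z ≠ 0 := fun z => Complex.exp_ne_zero _
  have hHabs : ∀ z, ‖H z‖ = Real.exp ((q z).re + ε) := by
    intro z
    rw [hH_def]
    simp only [Complex.norm_exp, Complex.add_re, Complex.ofReal_re]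
  have hflow : ∀ t : ℝ, 0 < ‖f ((r:ℂ) * Complex.exp ((t:ℂ) * Complex.I))‖ + ε :=
    fun t => by positivity
  have hlow : ∀ t : ℝ, ‖f ((r:ℂ) * Complex.exp ((t:ℂ) * Complex.I))‖ + ε
      ≤ ‖H (Complex.exp ((t:ℂ) * Complex.I))‖ := by
    intro t
    rw [hHabs]
    have h1 := (abs_le.1 (hqu t)).1
    have h2 : u t ≤ (q (Complex.exp ((t:ℂ) * Complex.I))).re + ε := by linarith
    calc ‖f ((r:ℂ) * Complex.exp ((t:ℂ) * Complex.I))‖ + ε = Real.exp (u t) :=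
          (Real.exp_log (hflow t)).symm
      _ ≤ _ := Real.exp_le_exp.mpr h2
  have hup : ∀ t : ℝ, ‖H (Complex.exp ((t:ℂ) * Complex.I))‖^2
      ≤ Real.exp (4*ε) * ((1+ε) * ‖f ((r:ℂ) * Complex.exp ((t:ℂ) * Complex.I))‖^2 + (ε^2 + ε)) := by
    intro t
    rw [hHabs]
    set a := ‖f ((r:ℂ) * Complex.exp ((t:ℂ) * Complex.I))‖ with ha
    have ha0 : 0 ≤ a := norm_nonneg _
    have h1 := (abs_le.1 (hqu t)).2
    have h2 : (q (Complex.exp ((t:ℂ) * Complex.I))).re + ε ≤ u t + 2*ε := by linarith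
    have h3 : Real.exp ((q (Complex.exp ((t:ℂ) * Complex.I))).re + ε)^2
        ≤ Real.exp (u t + 2*ε)^2 := by
      apply pow_le_pow_left₀ (Real.exp_pos _).le (Real.exp_le_exp.mpr h2)
    refine h3.trans ?_
    have h4 : Real.exp (u t + 2*ε)^2 = Real.exp (4*ε) * (a + ε)^2 := by
      rw [← Real.exp_nat_mul]
      have : Real.exp (u t) = a + ε := Real.exp_log (hflow t)
      calc Real.exp ((2:ℕ) * (u t + 2*ε)) = Real.exp (4*ε) * (Real.exp (u t))^2 := by
            rw [pow_two, ← Real.exp_add, ← Real.exp_add]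
            congr 1
            push_cast
            ring
        _ = Real.exp (4*ε) * (a + ε)^2 := by rw [this]
    rw [h4]
    apply mul_le_mul_of_nonneg_left _ (Real.exp_pos _).le
    nlinarith [mul_nonneg hε.le (sq_nonneg (a - 1))]
  -- maximum principle
  have hdom : ∀ z ∈ closedBall (0:ℂ) 1, ‖f ((r:ℂ) * z)‖ ≤ ‖H z‖ := by
    set F : ℂ → X := fun z => (H z)⁻¹ • f ((r:ℂ) * z) with hF_def
    have hrinv : 1 < r⁻¹ := (one_lt_inv₀ hr0).mpr hr1
    have hFd : DifferentiableOn ℂ F (ball 0 r⁻¹) := by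
      apply DifferentiableOn.smul
      · exact (hH.differentiableOn).inv (fun z _ => hHne z)
      · apply hf.comp ((differentiable_id.const_mul ((r:ℂ))).differentiableOn)
        intro z hz
        rw [mem_ball_zero_iff] at hz ⊢
        calc ‖(r:ℂ) * z‖ = r * ‖z‖ := by
              rw [norm_mul, Complex.norm_real, Real.norm_eq_abs, abs_of_nonneg hr0.le]
          _ < r * r⁻¹ := by exact mul_lt_mul_of_pos_left hz hr0
          _ = 1 := mul_inv_cancel₀ hr0.ne'
    have hsub : closure (ball (0:ℂ) 1) ⊆ ball (0:ℂ) r⁻¹ := by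
      rw [closure_ball (0:ℂ) one_ne_zero]
      intro z hz
      rw [mem_closedBall_zero_iff] at hz
      rw [mem_ball_zero_iff]
      exact lt_of_le_of_lt hz hrinv
    have hFc : DiffContOnCl ℂ F (ball 0 1) := DifferentiableOn.diffContOnCl (hFd.mono hsub)
    have hFb : ∀ z ∈ frontier (ball (0:ℂ) 1), ‖F z‖ ≤ 1 := by
      intro z hz
      rw [frontier_ball (0:ℂ) one_ne_zero] at hz
      have : z ∈ Set.range fun x : ℝ => Complex.exp (x * Complex.I) := by
        rw [Complex.range_exp_mul_I]; exact hz
      obtain ⟨t, ht⟩ := this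
      have hHpos : 0 < ‖H z‖ := norm_pos_iff.mpr (hHne z)
      have hle : ‖f ((r:ℂ) * z)‖ ≤ ‖H z‖ := by
        rw [← ht]
        calc ‖f ((r:ℂ) * Complex.exp ((t:ℂ) * Complex.I))‖
            ≤ ‖f ((r:ℂ) * Complex.exp ((t:ℂ) * Complex.I))‖ + ε := by linarith
          _ ≤ ‖H (Complex.exp ((t:ℂ) * Complex.I))‖ := hlow t
      rw [hF_def]
      simp only [norm_smul, norm_inv]
      calc ‖H z‖⁻¹ * ‖f ((r:ℂ) * z)‖ ≤ ‖H z‖⁻¹ * ‖H z‖ :=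
            mul_le_mul_of_nonneg_left hle (inv_nonneg.mpr (norm_nonneg _))
        _ = 1 := inv_mul_cancel₀ hHpos.ne'
    intro z hz
    have hFz : ‖F z‖ ≤ 1 := by
      apply Complex.norm_le_of_forall_mem_frontier_norm_le isBounded_ball hFc hFb
      rw [closure_ball (0:ℂ) one_ne_zero]
      exact hz
    have hfz : f ((r:ℂ) * z) = H z • F z := by
      rw [hF_def]
      simp only [smul_smul, mul_inv_cancel₀ (hHne z), one_smul]
    rw [hfz, norm_smul]
    calc ‖H z‖ * ‖F z‖ ≤ ‖H z‖ * 1 := mul_le_mul_of_nonneg_left hFz (norm_nonneg _)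
      _ = ‖H z‖ := mul_one _
  -- Hardy norm of H
  set B1 : ℝ := (2*Real.pi)⁻¹ * ∫ t in (0:ℝ)..(2*Real.pi),
    ‖H (Complex.exp ((t:ℂ) * Complex.I))‖^2 with hB1_def
  have hset : ∀ y ∈ hardySet H, y ≤ B1 := by
    rintro y ⟨ρ, ⟨hρ0, hρ1⟩, rfl⟩
    exact mul_le_mul_of_nonneg_left (meanSq_le hH hρ0 hρ1.le) (by positivity)
  have hbdd : BddAbove (hardySet H) := ⟨B1, hset⟩
  have hne : (hardySet H).Nonempty := ⟨_, ⟨0, ⟨le_refl 0, zero_lt_one⟩, rfl⟩⟩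
  have hHsq : hardySq H ≤ B1 := csSup_le hne hset
  -- bound B1
  set If : ℝ := ∫ t in (0:ℝ)..(2*Real.pi),
    ‖f ((r:ℂ) * Complex.exp ((t:ℂ) * Complex.I))‖^2 with hIf_def
  have hM : (2*Real.pi)⁻¹ * If ∈ hardySet f := ⟨r, ⟨hr0.le, hr1⟩, rfl⟩
  have hMQ : (2*Real.pi)⁻¹ * If ≤ hardySq f := le_csSup hb hM
  have hHint : IntervalIntegrable (fun t : ℝ => ‖H (Complex.exp ((t:ℂ) * Complex.I))‖^2)
      volume 0 (2*Real.pi) := by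
    apply Continuous.intervalIntegrable
    exact ((hH.continuous.comp (by continuity)).norm.pow 2)
  have hfint : IntervalIntegrable
      (fun t : ℝ => ‖f ((r:ℂ) * Complex.exp ((t:ℂ) * Complex.I))‖^2) volume 0 (2*Real.pi) :=
    (hfr.norm.pow 2).intervalIntegrable _ _
  have hintle : (∫ t in (0:ℝ)..(2*Real.pi), ‖H (Complex.exp ((t:ℂ) * Complex.I))‖^2)
      ≤ Real.exp (4*ε) * (1+ε) * If + Real.exp (4*ε) * (ε^2+ε) * (2*Real.pi) := by
    have h5 : (∫ t in (0:ℝ)..(2*Real.pi), ‖H (Complex.exp ((t:ℂ) * Complex.I))‖^2)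
        ≤ ∫ t in (0:ℝ)..(2*Real.pi),
            (Real.exp (4*ε) * (1+ε) * ‖f ((r:ℂ) * Complex.exp ((t:ℂ) * Complex.I))‖^2
              + Real.exp (4*ε) * (ε^2+ε)) := by
      apply intervalIntegral.integral_mono_on h2pi.le hHint
      · exact ((hfint.const_mul _).add (intervalIntegrable_const))
      · intro t _
        have := hup t
        calc ‖H (Complex.exp ((t:ℂ) * Complex.I))‖^2
            ≤ Real.exp (4*ε) * ((1+ε) * ‖f ((r:ℂ) * Complex.exp ((t:ℂ) * Complex.I))‖^2
                + (ε^2 + ε)) := this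
          _ = Real.exp (4*ε) * (1+ε) * ‖f ((r:ℂ) * Complex.exp ((t:ℂ) * Complex.I))‖^2
                + Real.exp (4*ε) * (ε^2+ε) := by ring
    refine h5.trans ?_
    rw [intervalIntegral.integral_add (hfint.const_mul _) intervalIntegrable_const,
      intervalIntegral.integral_const_mul, intervalIntegral.integral_const]
    simp only [sub_zero, smul_eq_mul]
    rw [hIf_def]
    apply le_of_eq
    ring
  have hB1le : B1 ≤ Real.exp (4*ε) * ((1+ε) * hardySq f + (ε^2 + ε)) := by
    rw [hB1_def]
    calc (2*Real.pi)⁻¹ * ∫ t in (0:ℝ)..(2*Real.pi), ‖H (Complex.exp ((t:ℂ) * Complex.I))‖^2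
        ≤ (2*Real.pi)⁻¹ * (Real.exp (4*ε) * (1+ε) * If + Real.exp (4*ε) * (ε^2+ε) * (2*Real.pi)) :=
          mul_le_mul_of_nonneg_left hintle (by positivity)
      _ = Real.exp (4*ε) * ((1+ε) * ((2*Real.pi)⁻¹ * If) + (ε^2+ε)) := by
          field_simp
      _ ≤ Real.exp (4*ε) * ((1+ε) * hardySq f + (ε^2+ε)) := by
          apply mul_le_mul_of_nonneg_left _ (Real.exp_pos _).le
          apply add_le_add_left
          exact mul_le_mul_of_nonneg_left hMQ (by linarith)
  calc ∫⁻ z in 𝔻, ENNReal.ofReal (‖f ((r:ℂ) * z)‖ ^ 2) ∂μ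
      ≤ ∫⁻ z in 𝔻, ENNReal.ofReal (‖H z‖ ^ 2) ∂μ := by
        apply lintegral_mono_ae
        rw [ae_restrict_iff' measurableSet_ball]
        apply ae_of_all
        intro z hz
        exact ENNReal.ofReal_le_ofReal
          (pow_le_pow_left₀ (norm_nonneg _) (hdom z (ball_subset_closedBall hz)) 2)
    _ ≤ ENNReal.ofReal (C * hardySq H) := hcar H hH.differentiableOn hbdd
    _ ≤ ENNReal.ofReal (C * (Real.exp (4*ε) * ((1+ε) * hardySq f + (ε^2 + ε)))) :=
        ENNReal.ofReal_le_ofReal (mul_le_mul_of_nonneg_left (hHsq.trans hB1le) hC)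


/-- Carleson embedding with values in an arbitrary Banach space: if
`∬_𝔻 |h|² dμ ≤ C‖h‖²_{H²}` for all scalar `h ∈ H²`, then for every Banach space `X` and every
`f ∈ H²(X)` one has `∬_𝔻 ‖f‖²_X dμ ≤ C‖f‖²_{H²(X)}`. -/
theorem stmt_10.{u} (μ : Measure ℂ) (C : ℝ)
    (hcar : ∀ h : ℂ → ℂ, DifferentiableOn ℂ h 𝔻 → BddAbove (hardySet h) →
      ∫⁻ z in 𝔻, ENNReal.ofReal (‖h z‖ ^ 2) ∂μ ≤ ENNReal.ofReal (C * hardySq h)) :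
    ∀ (X : Type u) [NormedAddCommGroup X] [NormedSpace ℂ X] [CompleteSpace X],
      ∀ f : ℂ → X, DifferentiableOn ℂ f 𝔻 → BddAbove (hardySet f) →
        ∫⁻ z in 𝔻, ENNReal.ofReal (‖f z‖ ^ 2) ∂μ ≤ ENNReal.ofReal (C * hardySq f) := by
  intro X _ _ _ f hf hb
  have h2pi : (0:ℝ) < 2*Real.pi := by positivity
  rcases lt_or_ge C 0 with hC | hC
  · -- C < 0 : the measure must vanish on 𝔻
    have hs : hardySet (fun _ : ℂ => (1:ℂ)) = {1} := by
      unfold hardySet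
      have hfun : (fun r : ℝ => (2 * Real.pi)⁻¹ *
          ∫ t in (0 : ℝ)..(2 * Real.pi),
            ‖(fun _ : ℂ => (1:ℂ)) ((r : ℂ) * Complex.exp ((t : ℂ) * Complex.I))‖ ^ 2)
          = fun _ : ℝ => (1:ℝ) := by
        funext r
        simp only [norm_one, one_pow, intervalIntegral.integral_const, sub_zero, smul_eq_mul,
          mul_one]
        exact inv_mul_cancel₀ h2pi.ne'
      rw [hfun]
      exact Set.Nonempty.image_const (⟨0, ⟨le_refl 0, zero_lt_one⟩⟩ : (Set.Ico (0:ℝ) 1).Nonempty) _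
    have hsq : hardySq (fun _ : ℂ => (1:ℂ)) = 1 := by
      rw [hardySq, hs, csSup_singleton]
    have h1 := hcar (fun _ => (1:ℂ)) (differentiable_const _).differentiableOn
      (hs ▸ bddAbove_singleton)
    rw [hsq] at h1
    simp only [norm_one, one_pow, ENNReal.ofReal_one, mul_one] at h1
    rw [setLIntegral_one] at h1
    have hμ0 : μ 𝔻 = 0 := le_antisymm
      (h1.trans (le_of_eq (ENNReal.ofReal_eq_zero.mpr hC.le))) zero_le
    have hres : μ.restrict 𝔻 = 0 := Measure.restrict_eq_zero.mpr hμ0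
    rw [hres, lintegral_zero_measure]
    exact zero_le
  · set Q := hardySq f with hQ_def
    have hfc : ContinuousOn f 𝔻 := hf.continuousOn
    have hQ0 : 0 ≤ Q := by
      have h0mem : (fun r : ℝ => (2 * Real.pi)⁻¹ *
          ∫ t in (0 : ℝ)..(2 * Real.pi), ‖f ((r : ℂ) * Complex.exp ((t : ℂ) * Complex.I))‖ ^ 2) 0
          ∈ hardySet f :=
        Set.mem_image_of_mem _ ⟨le_refl (0:ℝ), zero_lt_one⟩
      refine le_trans ?_ (le_csSup hb h0mem)
      simp only
      apply mul_nonneg (by positivity)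
      apply intervalIntegral.integral_nonneg h2pi.le
      intro t _
      positivity
    have hr_bound : ∀ r : ℝ, 0 < r → r < 1 →
        ∫⁻ z in 𝔻, ENNReal.ofReal (‖f ((r:ℂ) * z)‖ ^ 2) ∂μ ≤ ENNReal.ofReal (C * Q) := by
      intro r h0 h1
      have hstep : ∀ n : ℕ, ∫⁻ z in 𝔻, ENNReal.ofReal (‖f ((r:ℂ) * z)‖ ^ 2) ∂μ ≤
          ENNReal.ofReal (C * (Real.exp (4*((1:ℝ)/(n+1))) *
            ((1+(1:ℝ)/(n+1)) * Q + (((1:ℝ)/(n+1))^2 + (1:ℝ)/(n+1))))) := by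
        intro n
        exact keyStep hcar hC hf hb h0 h1 (by positivity)
      have htend1 : Tendsto (fun n : ℕ => (1:ℝ)/(n+1)) atTop (𝓝 0) :=
        tendsto_one_div_add_atTop_nhds_zero_nat
      have hgc : Continuous (fun e : ℝ =>
          ENNReal.ofReal (C * (Real.exp (4*e) * ((1+e) * Q + (e^2 + e))))) := by
        apply ENNReal.continuous_ofReal.comp
        continuity
      have htend := (hgc.tendsto 0).comp htend1
      have hval : ENNReal.ofReal (C * (Real.exp (4*0) * ((1+0) * Q + ((0:ℝ)^2 + 0)))) =
          ENNReal.ofReal (C * Q) := by norm_num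
      rw [Function.comp_def] at htend
      rw [hval] at htend
      exact ge_of_tendsto' htend hstep
    -- Fatou along a sequence of radii increasing to 1
    set rs : ℕ → ℝ := fun n => 1 - 1/(n+2) with hrs_def
    have hrs0 : ∀ n, 0 < rs n := by
      intro n
      have h2 : (2:ℝ) ≤ (n:ℝ) + 2 := by
        have : (0:ℝ) ≤ (n:ℝ) := Nat.cast_nonneg n
        linarith
      have : (1:ℝ)/((n:ℝ)+2) ≤ 1/2 := by
        apply div_le_div_of_nonneg_left one_pos.le two_pos h2
      simp only [hrs_def]
      linarith
    have hrs1 : ∀ n, rs n < 1 := by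
      intro n
      have : (0:ℝ) < 1/((n:ℝ)+2) := by positivity
      simp only [hrs_def]
      linarith
    have hrs_tendsto : Tendsto rs atTop (𝓝 1) := by
      have h1 : Tendsto (fun n : ℕ => (1:ℝ)/(n+2)) atTop (𝓝 0) := by
        have h2 := (tendsto_one_div_add_atTop_nhds_zero_nat (𝕜 := ℝ)).comp (tendsto_add_atTop_nat 1)
        have heq : ((fun n : ℕ => (1:ℝ)/(n+1)) ∘ (fun n => n + 1)) = fun n : ℕ => (1:ℝ)/(n+2) := by
          funext n
          simp only [Function.comp_apply]
          congr 1
          push_cast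
          ring
        rwa [heq] at h2
      have h2 := (tendsto_const_nhds (x := (1:ℝ))).sub h1
      rw [sub_zero] at h2
      rw [hrs_def]
      exact h2
    have hmap : ∀ (n : ℕ) (z : ℂ), z ∈ 𝔻 → ((rs n : ℝ):ℂ) * z ∈ 𝔻 := by
      intro n z hz
      rw [mem_ball_zero_iff] at hz ⊢
      rw [norm_mul, Complex.norm_real, Real.norm_eq_abs, abs_of_nonneg (hrs0 n).le]
      calc rs n * ‖z‖ ≤ 1 * ‖z‖ :=
            mul_le_mul_of_nonneg_right (hrs1 n).le (norm_nonneg _)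
        _ = ‖z‖ := one_mul _
        _ < 1 := hz
    have hpointwise : ∀ z ∈ 𝔻, ENNReal.ofReal (‖f z‖ ^ 2) ≤
        liminf (fun n => ENNReal.ofReal (‖f (((rs n : ℝ):ℂ) * z)‖ ^ 2)) atTop := by
      intro z hz
      have harg : Tendsto (fun n => ((rs n : ℝ):ℂ) * z) atTop (𝓝 z) := by
        have h1 : Tendsto (fun n => ((rs n : ℝ):ℂ)) atTop (𝓝 ((1:ℝ):ℂ)) :=
          (Complex.continuous_ofReal.tendsto 1).comp hrs_tendsto
        have h2 := h1.mul_const z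
        simpa using h2
      have harg' : Tendsto (fun n => ((rs n : ℝ):ℂ) * z) atTop (𝓝[𝔻] z) :=
        tendsto_nhdsWithin_iff.mpr ⟨harg, Filter.Eventually.of_forall fun n => hmap n z hz⟩
      have h1 : Tendsto (fun n => f (((rs n : ℝ):ℂ) * z)) atTop (𝓝 (f z)) :=
        (hfc z hz).tendsto.comp harg'
      have hT : Tendsto (fun n => ENNReal.ofReal (‖f (((rs n : ℝ):ℂ) * z)‖ ^ 2)) atTop
          (𝓝 (ENNReal.ofReal (‖f z‖ ^ 2))) :=
        (ENNReal.continuous_ofReal.tendsto _).comp (((continuous_pow 2).tendsto _).comp h1.norm)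
      exact hT.liminf_eq.ge
    have hmeas : ∀ n : ℕ, AEMeasurable (fun z => ENNReal.ofReal (‖f (((rs n : ℝ):ℂ) * z)‖ ^ 2))
        (μ.restrict 𝔻) := by
      intro n
      have hcont : ContinuousOn (fun z => f (((rs n : ℝ):ℂ) * z)) 𝔻 := by
        apply hfc.comp (continuous_const.mul continuous_id).continuousOn
        intro z hz
        exact hmap n z hz
      have hcont2 : ContinuousOn (fun z => ‖f (((rs n : ℝ):ℂ) * z)‖^2) 𝔻 :=
        (hcont.norm).pow 2
      have h1 : AEMeasurable (fun z => ‖f (((rs n : ℝ):ℂ) * z)‖^2) (μ.restrict 𝔻) :=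
        hcont2.aemeasurable measurableSet_ball
      exact ENNReal.measurable_ofReal.comp_aemeasurable h1
    calc ∫⁻ z in 𝔻, ENNReal.ofReal (‖f z‖ ^ 2) ∂μ
        ≤ ∫⁻ z in 𝔻, liminf (fun n => ENNReal.ofReal (‖f (((rs n : ℝ):ℂ) * z)‖ ^ 2)) atTop ∂μ := by
          apply lintegral_mono_ae
          rw [ae_restrict_iff' measurableSet_ball]
          exact ae_of_all _ hpointwise
      _ ≤ liminf (fun n => ∫⁻ z in 𝔻, ENNReal.ofReal (‖f (((rs n : ℝ):ℂ) * z)‖ ^ 2) ∂μ) atTop :=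
          lintegral_liminf_le' hmeas
      _ ≤ ENNReal.ofReal (C * Q) := by
          calc liminf (fun n => ∫⁻ z in 𝔻,
                ENNReal.ofReal (‖f (((rs n : ℝ):ℂ) * z)‖ ^ 2) ∂μ) atTop
              ≤ liminf (fun _ : ℕ => ENNReal.ofReal (C * Q)) atTop :=
                Filter.liminf_le_liminf
                  (Filter.Eventually.of_forall fun n => hr_bound (rs n) (hrs0 n) (hrs1 n))
            _ = ENNReal.ofReal (C * Q) := Filter.liminf_const _
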